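/- Pauli support of the full encoded state (equation (r-decomposition)): let n ≡ 1 (mod 4) and let p, m be positive integers, q = n+m. For any density matrix Ψ on p qubits, U·E(Ψ)·U† = 2^{−pq} · Σ_{v ∈ {0,1,2,3}^p} tr(σ_v Ψ) · σ_{A_v}, where σ_v = ⊗_{x=1}^{p} σ_{v(x)} is a Pauli string on the p input qubits and A_v is the p×q matrix whose first n columns each equal v and whose last m columns are zero. -/

import Mathlib

open Matrix ComplexOrder

noncomputable section

/-- States of a `p × q` grid of qubits. -/
abbrev GState (p q : ℕ) := Fin p × Fin q → Fin 2

/-- Operators on a `p × q` grid of qubits. -/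
abbrev GMat (p q : ℕ) := Matrix (GState p q) (GState p q) ℂ

/-- The CNOT gate on the grid with control qubit `c` and target qubit `t`:
the permutation matrix mapping the basis state `f` to `f` updated at `t` to
`f t + f c` (mod 2). -/
def gCNOT {p q : ℕ} (c t : Fin p × Fin q) : GMat p q :=
  fun g f => if g = Function.update f t (f t + f c) then 1 else 0

/-- The encoding unitary `U_x = (C_{(x,1)→(x,2)} ⋯ C_{(x,1)→(x,n)})·
(C_{(x,2)→(x,1)} ⋯ C_{(x,n)→(x,1)})` acting on the first `n` columns of row `x`
(columns 1-indexed in the informal statement, 0-indexed here). -/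
def rowU {p q : ℕ} (n : ℕ) (hn : 0 < n) (hnq : n ≤ q) (x : Fin p) : GMat p q :=
  (((List.range n).map fun j =>
      if hj : 0 < j ∧ j < n then
        gCNOT (x, ⟨0, lt_of_lt_of_le hn hnq⟩) (x, ⟨j, lt_of_lt_of_le hj.2 hnq⟩)
      else 1).prod) *
  (((List.range n).map fun j =>
      if hj : 0 < j ∧ j < n then
        gCNOT (x, ⟨j, lt_of_lt_of_le hj.2 hnq⟩) (x, ⟨0, lt_of_lt_of_le hn hnq⟩)
      else 1).prod)

/-- The full encoding unitary `U = ⊗_x U_x` (identity on columns `n+1,…,q`). -/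
def encU (p q n : ℕ) (hn : 0 < n) (hnq : n ≤ q) : GMat p q :=
  ((List.finRange p).map fun x => rowU n hn hnq x).prod

/-- The channel `E` which takes a density matrix `Ψ` on the `p` qubits of the first
column and returns `Ψ ⊗ (I/2)^{⊗ p(q−1)}` on the full grid, the maximally mixed state
on all other columns. -/
def Echan (p q : ℕ) (hq : 0 < q) (Ψ : Matrix (Fin p → Fin 2) (Fin p → Fin 2) ℂ) :
    GMat p q :=
  fun g f =>
    Ψ (fun x => g (x, ⟨0, hq⟩)) (fun x => f (x, ⟨0, hq⟩)) *
      (if ∀ (x : Fin p) (y : Fin q), y ≠ ⟨0, hq⟩ → g (x, y) = f (x, y) then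
        ((1 : ℂ) / 2) ^ (p * (q - 1)) else 0)

/-- For a permutation `π` of the columns, `P_π` is the unitary permutation matrix
mapping the basis state `f` to the basis state `g` with `g (x, π y) = f (x, y)`. -/
def permMat (p q : ℕ) (π : Equiv.Perm (Fin q)) : GMat p q :=
  fun g f => if ∀ (x : Fin p) (y : Fin q), g (x, π y) = f (x, y) then 1 else 0

/-- The average `(1/q!)·Σ_{π ∈ S_q} P_π ρ P_π†` of `ρ` over all column permutations. -/
def permAvg (p q : ℕ) (ρ : GMat p q) : GMat p q :=
  ((Nat.factorial q : ℂ))⁻¹ •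
    ∑ π : Equiv.Perm (Fin q), permMat p q π * ρ * (permMat p q π)ᴴ

/-- The Pauli matrices `σ₀ = I`, `σ₁ = X`, `σ₂ = Y`, `σ₃ = Z`. -/
def pauli : Fin 4 → Matrix (Fin 2) (Fin 2) ℂ :=
  ![1, !![0, 1; 1, 0], !![0, -Complex.I; Complex.I, 0], !![1, 0; 0, -1]]

/-- For a `p × q` matrix `A` with entries in `{0,1,2,3}`, the Pauli string
`σ_A = ⊗_{(x,y)} σ_{A(x,y)}` on the grid. -/
def gridPauli {p q : ℕ} (A : Fin p → Fin q → Fin 4) : GMat p q :=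
  fun g f => ∏ z : Fin p × Fin q, pauli (A z.1 z.2) (g z) (f z)

/-- The Pauli string `σ_v = ⊗_{x} σ_{v(x)}` on the `p` input qubits. -/
def pauliString {p : ℕ} (v : Fin p → Fin 4) :
    Matrix (Fin p → Fin 2) (Fin p → Fin 2) ℂ :=
  fun g f => ∏ x : Fin p, pauli (v x) (g x) (f x)

lemma fin2_cases (a : Fin 2) : a = 0 ∨ a = 1 := by omega
lemma fin2_add_self (a : Fin 2) : a + a = 0 := by revert a; decide
lemma fin2_ne_iff (a b : Fin 2) : a ≠ b ↔ a = b + 1 := by revert a b; decide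
lemma fin2_arith (a b : Fin 2) : (a+1)+(b+1) = a + b := by revert a b; decide
open Fin.CommRing in
lemma fin2_natCast_odd (n : ℕ) (h : n % 2 = 1) : (n : Fin 2) = 1 := by
  apply Fin.ext
  rw [Fin.val_natCast]
  simp [h]

lemma neg_one_pow_fin2_add (a b : Fin 2) :
    (-1:ℂ)^(((a+b) : Fin 2):ℕ) = (-1)^(a:ℕ) * (-1)^(b:ℕ) := by
  rw [Fin.val_add, ← neg_one_pow_eq_pow_mod_two, pow_add]

lemma prod_neg_one_pow {ι : Type*} (s : Finset ι) (v : ι → Fin 2) :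
    ∏ i ∈ s, (-1:ℂ)^((v i):ℕ) = (-1)^(((∑ i ∈ s, v i) : Fin 2):ℕ) := by
  induction s using Finset.cons_induction with
  | empty => simp
  | cons a s ha ih => rw [Finset.prod_cons, Finset.sum_cons, ih, neg_one_pow_fin2_add]

lemma prod_ite_zero {ι : Type*} (s : Finset ι) (P : ι → Prop) [DecidablePred P] (c : ι → ℂ) :
    (∏ i ∈ s, if P i then c i else 0) = if ∀ i ∈ s, P i then ∏ i ∈ s, c i else 0 := by
  by_cases h : ∀ i ∈ s, P i
  · rw [if_pos h]; exact Finset.prod_congr rfl fun i hi => if_pos (h i hi)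
  · rw [if_neg h]; push_neg at h; obtain ⟨i, hi, hPi⟩ := h
    exact Finset.prod_eq_zero hi (if_neg hPi)

lemma pauli_apply_zero (a b : Fin 2) : pauli 0 a b = if a = b then 1 else 0 := by
  fin_cases a <;> fin_cases b <;> simp [pauli, Matrix.one_apply]
lemma pauli_apply_one (a b : Fin 2) : pauli 1 a b = if a ≠ b then 1 else 0 := by
  fin_cases a <;> fin_cases b <;> simp [pauli]
lemma pauli_apply_two (a b : Fin 2) : pauli 2 a b = if a ≠ b then Complex.I * (-1:ℂ)^(b:ℕ) else 0 := by
  fin_cases a <;> fin_cases b <;> simp [pauli]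
lemma pauli_apply_three (a b : Fin 2) : pauli 3 a b = if a = b then (-1:ℂ)^(a:ℕ) else 0 := by
  fin_cases a <;> fin_cases b <;> simp [pauli]

lemma I_pow_odd (n : ℕ) (h4 : n % 4 = 1) : Complex.I ^ n = Complex.I := by
  conv_lhs => rw [show n = 4*(n/4)+1 by omega]
  rw [pow_add, pow_mul, Complex.I_pow_four, one_pow, pow_one, one_mul]

section PermOf
variable {α : Type*} [DecidableEq α] [Fintype α]

def permOf (a : α → α) : Matrix α α ℂ :=
  fun g f => if g = a f then 1 else 0

lemma permOf_id : permOf (id : α → α) = 1 := by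
  ext g f; simp [permOf, Matrix.one_apply, eq_comm]

lemma permOf_mul (a b : α → α) : permOf a * permOf b = permOf (a ∘ b) := by
  ext g f
  simp only [permOf, Matrix.mul_apply, Function.comp]
  rw [Finset.sum_eq_single (b f)]
  · simp
  · intro h _ hne; simp [hne, Ne.symm hne]
  · simp

lemma permOf_list_prod (L : List (α → α)) :
    (L.map permOf).prod = permOf (L.foldr (· ∘ ·) id) := by
  induction L with
  | nil => simp [permOf_id]
  | cons a T ih => simp [ih, permOf_mul]

lemma conj_permOf (e : α ≃ α) (M : Matrix α α ℂ) (g f : α) :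
    (permOf ⇑e * M * (permOf ⇑e)ᴴ) g f = M (e.symm g) (e.symm f) := by
  simp only [Matrix.mul_apply, Matrix.conjTranspose_apply, permOf]
  rw [Finset.sum_eq_single (e.symm f)]
  · rw [Finset.sum_eq_single (e.symm g)]
    · simp
    · intro b _ hb
      have : g ≠ e b := by
        intro h; exact hb (by simp [h])
      simp [this]
    · simp
  · intro b _ hb
    have : f ≠ e b := by
      intro h; exact hb (by simp [h])
    simp [this]
  · simp
end PermOf

lemma foldr_comp_apply {β : Type*} (L : List (β → β)) (c : β → β) :
    L.foldr (· ∘ ·) c = (L.foldr (· ∘ ·) id) ∘ c := by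
  induction L with
  | nil => rfl
  | cons a T ih => simp [List.foldr_cons, ih, Function.comp_assoc]

def cnotFun {p q : ℕ} (c t : Fin p × Fin q) : GState p q → GState p q :=
  fun f => Function.update f t (f t + f c)

lemma gCNOT_eq_permOf {p q : ℕ} (c t : Fin p × Fin q) : gCNOT c t = permOf (cnotFun c t) := rfl

def colSum {p q : ℕ} (n : ℕ) (hnq : n ≤ q) (f : GState p q) (x : Fin p) : Fin 2 :=
  ∑ j : Fin n, f (x, Fin.castLE hnq j)

def tfun {p q : ℕ} (n : ℕ) (hn : 0 < n) (hnq : n ≤ q) (f : GState p q) : GState p q :=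
  fun z => if (z.2:ℕ) < n then
    (if (z.2:ℕ) = 0 then colSum n hnq f z.1 else f z + colSum n hnq f z.1) else f z

def sfun {p q : ℕ} (n : ℕ) (hn : 0 < n) (hnq : n ≤ q) (f : GState p q) : GState p q :=
  fun z => if (z.2:ℕ) < n then
    (if (z.2:ℕ) = 0 then colSum n hnq f z.1
     else f z + f (z.1, ⟨0, lt_of_lt_of_le hn hnq⟩)) else f z

def pvf {p q : ℕ} (n : ℕ) (hnq : n ≤ q) (x : Fin p) (f : GState p q) (j : ℕ) : Fin 2 :=
  if h : j < n then f (x, ⟨j, lt_of_lt_of_le h hnq⟩) else 0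

def qfun {p q : ℕ} (n : ℕ) (hn : 0 < n) (hnq : n ≤ q) (x : Fin p) (j : ℕ) :
    GState p q → GState p q :=
  if hj : 0 < j ∧ j < n then
    cnotFun (x, ⟨j, lt_of_lt_of_le hj.2 hnq⟩) (x, ⟨0, lt_of_lt_of_le hn hnq⟩)
  else id

def pfun {p q : ℕ} (n : ℕ) (hn : 0 < n) (hnq : n ≤ q) (x : Fin p) (j : ℕ) :
    GState p q → GState p q :=
  if hj : 0 < j ∧ j < n then
    cnotFun (x, ⟨0, lt_of_lt_of_le hn hnq⟩) (x, ⟨j, lt_of_lt_of_le hj.2 hnq⟩)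
  else id

lemma qstage {p q : ℕ} (n : ℕ) (hn : 0 < n) (hnq : n ≤ q) (x : Fin p) :
    ∀ k, 0 < k → k ≤ n → ∀ f : GState p q,
    ((List.range k).map (qfun n hn hnq x)).foldr (· ∘ ·) id f
      = Function.update f (x, ⟨0, lt_of_lt_of_le hn hnq⟩)
          (∑ j ∈ Finset.range k, pvf n hnq x f j) := by
  intro k hk
  induction k, hk using Nat.le_induction with
  | base =>
    intro _ f
    have h0 : qfun n hn hnq x 0 = id := by
      unfold qfun; rw [dif_neg]; omega
    rw [show List.range 1 = [0] from rfl]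
    simp only [List.map_cons, List.map_nil, List.foldr_cons, List.foldr_nil,
      Function.comp_id, h0, Finset.sum_range_one, id_eq]
    have : pvf n hnq x f 0 = f (x, ⟨0, lt_of_lt_of_le hn hnq⟩) := by
      unfold pvf; rw [dif_pos hn]
    rw [this, Function.update_eq_self]
  | succ k hk1 ih =>
    intro hkn f
    have hkn' : k ≤ n := by omega
    rw [List.range_succ, List.map_append, List.foldr_append]
    simp only [List.map_cons, List.map_nil, List.foldr_cons, List.foldr_nil, Function.comp_id]
    rw [foldr_comp_apply]
    have hq : qfun n hn hnq x k =
        cnotFun (x, ⟨k, lt_of_lt_of_le (by omega) hnq⟩) (x, ⟨0, lt_of_lt_of_le hn hnq⟩) := by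
      unfold qfun; rw [dif_pos ⟨by omega, by omega⟩]
    set t0 : Fin p × Fin q := (x, ⟨0, lt_of_lt_of_le hn hnq⟩) with ht0
    set ck : Fin p × Fin q := (x, ⟨k, lt_of_lt_of_le (by omega : k < n) hnq⟩) with hck
    have : (((List.range k).map (qfun n hn hnq x)).foldr (· ∘ ·) id ∘ qfun n hn hnq x k) f
        = Function.update (Function.update f t0 (f t0 + f ck)) t0
          (∑ j ∈ Finset.range k, pvf n hnq x (Function.update f t0 (f t0 + f ck)) j) := by
      rw [Function.comp_apply, hq]
      exact ih hkn' _
    rw [this, Function.update_idem]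
    congr 1
    have hsum : ∀ j ∈ Finset.range k,
        pvf n hnq x (Function.update f t0 (f t0 + f ck)) j
          = pvf n hnq x f j + (if j = 0 then f ck else 0) := by
      intro j hj
      have hjk : j < k := Finset.mem_range.mp hj
      have hjn : j < n := by omega
      unfold pvf
      rw [dif_pos hjn, dif_pos hjn]
      by_cases hj0 : j = 0
      · subst hj0
        have : (x, (⟨0, lt_of_lt_of_le hjn hnq⟩ : Fin q)) = t0 := rfl
        rw [this, Function.update_self, if_pos rfl]
      · have : (x, (⟨j, lt_of_lt_of_le hjn hnq⟩ : Fin q)) ≠ t0 := by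
          simp [ht0, Prod.ext_iff, Fin.ext_iff, hj0]
        rw [Function.update_of_ne this, if_neg hj0, add_zero]
    rw [Finset.sum_congr rfl hsum, Finset.sum_add_distrib, Finset.sum_ite_eq' (Finset.range k) 0]
    rw [if_pos (Finset.mem_range.mpr (by omega : 0 < k)), Finset.sum_range_succ]
    congr 1
    unfold pvf
    rw [dif_pos (by omega : k < n)]

lemma pstage {p q : ℕ} (n : ℕ) (hn : 0 < n) (hnq : n ≤ q) (x : Fin p) :
    ∀ k, k ≤ n → ∀ (f : GState p q) (z : Fin p × Fin q),
    ((List.range k).map (pfun n hn hnq x)).foldr (· ∘ ·) id f z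
      = if z.1 = x ∧ 0 < (z.2:ℕ) ∧ (z.2:ℕ) < k
        then f z + f (x, ⟨0, lt_of_lt_of_le hn hnq⟩) else f z := by
  intro k
  induction k with
  | zero => intro _ f z; simp
  | succ k ih =>
    intro hkn f z
    have hkn' : k ≤ n := by omega
    rw [List.range_succ, List.map_append, List.foldr_append]
    simp only [List.map_cons, List.map_nil, List.foldr_cons, List.foldr_nil, Function.comp_id]
    rw [foldr_comp_apply, Function.comp_apply]
    by_cases hk0 : k = 0
    · subst hk0
      have h0 : pfun n hn hnq x 0 = id := by unfold pfun; rw [dif_neg]; omega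
      rw [h0, id_eq, ih (by omega)]
      have h1 : ¬ (0 < (z.2:ℕ) ∧ (z.2:ℕ) < 0) := by omega
      have h2 : ¬ (0 < (z.2:ℕ) ∧ (z.2:ℕ) < 1) := by omega
      have h2' : ¬ (0 < (z.2:ℕ) ∧ (z.2:ℕ) = 0) := by omega
      simp [h1, h2, h2']
    · have hkpos : 0 < k := by omega
      have hklt : k < n := by omega
      have hq : pfun n hn hnq x k =
          cnotFun (x, ⟨0, lt_of_lt_of_le hn hnq⟩) (x, ⟨k, lt_of_lt_of_le hklt hnq⟩) := by
        unfold pfun; rw [dif_pos ⟨hkpos, hklt⟩]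
      rw [hq]
      set t0 : Fin p × Fin q := (x, ⟨0, lt_of_lt_of_le hn hnq⟩) with ht0
      set tk : Fin p × Fin q := (x, ⟨k, lt_of_lt_of_le hklt hnq⟩) with htk
      have htkne : tk ≠ t0 := by simp [ht0, htk, Prod.ext_iff, Fin.ext_iff]; omega
      set g : GState p q := cnotFun t0 tk f with hg
      have hgt0 : g t0 = f t0 := by
        rw [hg]; unfold cnotFun; rw [Function.update_of_ne (Ne.symm htkne)]
      have hgtk : g tk = f tk + f t0 := by
        rw [hg]; unfold cnotFun; rw [Function.update_self]
      have hgz : ∀ w, w ≠ tk → g w = f w := by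
        intro w hw; rw [hg]; unfold cnotFun; rw [Function.update_of_ne hw]
      rw [ih hkn' g z]
      by_cases hz : z.1 = x ∧ 0 < (z.2:ℕ) ∧ (z.2:ℕ) < k
      · have hzk : z ≠ tk := by
          intro h; rw [h] at hz; exact absurd hz.2.2 (lt_irrefl k)
        have hz' : z.1 = x ∧ 0 < (z.2:ℕ) ∧ (z.2:ℕ) < k + 1 := ⟨hz.1, hz.2.1, Nat.lt_succ_of_lt hz.2.2⟩
        rw [if_pos hz, if_pos hz']
        rw [hgz z hzk, hgt0]
      · rw [if_neg hz]
        by_cases hztk : z = tk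
        · rw [hztk, hgtk, if_pos ⟨rfl, hkpos, Nat.lt_succ_self k⟩]
        · rw [hgz z hztk]
          rw [if_neg]
          intro ⟨h1, h2, h3⟩
          have : (z.2:ℕ) = k := by
            by_contra hne
            exact hz ⟨h1, h2, by omega⟩
          exact hztk (by
            rw [htk]
            exact Prod.ext h1 (Fin.ext this))

lemma sum_pvf {p q : ℕ} (n : ℕ) (hnq : n ≤ q) (x : Fin p) (f : GState p q) :
    ∑ j ∈ Finset.range n, pvf n hnq x f j = colSum n hnq f x := by
  rw [Finset.sum_range]
  apply Finset.sum_congr rfl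
  intro i _
  unfold pvf
  rw [dif_pos i.isLt]
  rfl

def rowMap {p q : ℕ} (n : ℕ) (hn : 0 < n) (hnq : n ≤ q) (x : Fin p) :
    GState p q → GState p q :=
  fun f z => if z.1 = x then tfun n hn hnq f z else f z

lemma rowU_eq {p q : ℕ} (n : ℕ) (hn : 0 < n) (hnq : n ≤ q) (x : Fin p) :
    rowU n hn hnq x = permOf (rowMap n hn hnq x) := by
  unfold rowU
  have e1 : (fun j =>
      if hj : 0 < j ∧ j < n then
        gCNOT (x, ⟨0, lt_of_lt_of_le hn hnq⟩) (x, ⟨j, lt_of_lt_of_le hj.2 hnq⟩)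
      else (1 : GMat p q)) = fun j => permOf (pfun n hn hnq x j) := by
    funext j
    unfold pfun
    split
    · rfl
    · exact permOf_id.symm
  have e2 : (fun j =>
      if hj : 0 < j ∧ j < n then
        gCNOT (x, ⟨j, lt_of_lt_of_le hj.2 hnq⟩) (x, ⟨0, lt_of_lt_of_le hn hnq⟩)
      else (1 : GMat p q)) = fun j => permOf (qfun n hn hnq x j) := by
    funext j
    unfold qfun
    split
    · rfl
    · exact permOf_id.symm
  rw [e1, e2]
  rw [show (List.range n).map (fun j => permOf (pfun n hn hnq x j))
      = ((List.range n).map (pfun n hn hnq x)).map permOf by rw [List.map_map]; rfl]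
  rw [show (List.range n).map (fun j => permOf (qfun n hn hnq x j))
      = ((List.range n).map (qfun n hn hnq x)).map permOf by rw [List.map_map]; rfl]
  rw [permOf_list_prod, permOf_list_prod, permOf_mul]
  apply congrArg permOf
  funext f z
  rw [Function.comp_apply]
  rw [qstage n hn hnq x n hn le_rfl f, sum_pvf]
  set t0 : Fin p × Fin q := (x, ⟨0, lt_of_lt_of_le hn hnq⟩) with ht0
  set S : Fin 2 := colSum n hnq f x with hS
  set g : GState p q := Function.update f t0 S with hg
  rw [pstage n hn hnq x n le_rfl g z]
  have hgt0 : g t0 = S := Function.update_self _ _ _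
  unfold rowMap tfun
  by_cases hz1 : z.1 = x
  · rw [if_pos hz1]
    by_cases hz0 : (z.2:ℕ) = 0
    · have hzt0 : z = t0 := Prod.ext hz1 (Fin.ext hz0)
      have : ¬ (z.1 = x ∧ 0 < (z.2:ℕ) ∧ (z.2:ℕ) < n) := by
        intro ⟨_, h2, _⟩; omega
      rw [if_neg this, hzt0, hgt0, if_pos (by omega : (0:ℕ) < n)]
      rw [if_pos rfl]
    · by_cases hzn : (z.2:ℕ) < n
      · have hcond : z.1 = x ∧ 0 < (z.2:ℕ) ∧ (z.2:ℕ) < n := ⟨hz1, by omega, hzn⟩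
        rw [if_pos hcond, if_pos hzn, if_neg hz0]
        have hznet0 : z ≠ t0 := by
          intro h; rw [h] at hz0; exact hz0 rfl
        rw [hg, Function.update_of_ne hznet0, hz1]
        exact congrArg (HAdd.hAdd (f z)) (Function.update_self t0 S f)
      · have : ¬ (z.1 = x ∧ 0 < (z.2:ℕ) ∧ (z.2:ℕ) < n) := by intro ⟨_, _, h3⟩; omega
        rw [if_neg this, if_neg hzn]
        have hznet0 : z ≠ t0 := by
          intro h
          rw [h] at hzn
          exact hzn (by simpa using hn)
        rw [hg, Function.update_of_ne hznet0]
  · have : ¬ (z.1 = x ∧ 0 < (z.2:ℕ) ∧ (z.2:ℕ) < n) := by intro ⟨h1, _, _⟩; exact hz1 h1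
    rw [if_neg this, if_neg hz1]
    have hznet0 : z ≠ t0 := by
      intro h; rw [h] at hz1; exact hz1 rfl
    rw [hg, Function.update_of_ne hznet0]

lemma foldr_rowMap {p q : ℕ} (n : ℕ) (hn : 0 < n) (hnq : n ≤ q) :
    ∀ L : List (Fin p), L.Nodup → ∀ (f : GState p q) (z : Fin p × Fin q),
    (L.map (rowMap n hn hnq)).foldr (· ∘ ·) id f z
      = if z.1 ∈ L then tfun n hn hnq f z else f z := by
  intro L
  induction L with
  | nil => intro _ f z; simp
  | cons a T ih =>
    intro hnd f z
    have haT : a ∉ T := (List.nodup_cons.mp hnd).1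
    have hTnd : T.Nodup := (List.nodup_cons.mp hnd).2
    simp only [List.map_cons, List.foldr_cons]
    rw [Function.comp_apply]
    set h : GState p q := (T.map (rowMap n hn hnq)).foldr (· ∘ ·) id f with hh
    have hrow : ∀ w : Fin p × Fin q, w.1 = a → h w = f w := by
      intro w hw
      rw [hh, ih hTnd f w, if_neg (by rw [hw]; exact haT)]
    have hcs : colSum n hnq h a = colSum n hnq f a := by
      unfold colSum
      exact Finset.sum_congr rfl fun j _ => hrow _ rfl
    show rowMap n hn hnq a h z = _
    unfold rowMap
    by_cases hz1 : z.1 = a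
    · rw [if_pos hz1, if_pos (by simp [hz1])]
      unfold tfun
      rw [hz1, hcs, hrow z hz1]
    · rw [if_neg hz1, hh, ih hTnd f z]
      simp only [List.mem_cons]
      by_cases hzT : z.1 ∈ T
      · rw [if_pos hzT, if_pos (Or.inr hzT)]
      · rw [if_neg hzT, if_neg (by rintro (h | h); exact hz1 h; exact hzT h)]

lemma encU_eq {p q : ℕ} (n : ℕ) (hn : 0 < n) (hnq : n ≤ q) :
    encU p q n hn hnq = permOf (tfun n hn hnq) := by
  unfold encU
  rw [show ((List.finRange p).map fun x => rowU n hn hnq x)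
      = ((List.finRange p).map (rowMap n hn hnq)).map permOf by
    rw [List.map_map]
    exact List.map_congr_left fun x _ => rowU_eq n hn hnq x]
  rw [permOf_list_prod]
  apply congrArg permOf
  funext f z
  rw [foldr_rowMap n hn hnq (List.finRange p) (List.nodup_finRange p) f z,
    if_pos (List.mem_finRange z.1)]

lemma filter_lt_map {q : ℕ} (n : ℕ) (hnq : n ≤ q) :
    Finset.univ.filter (fun y : Fin q => (y:ℕ) < n)
      = Finset.map ⟨Fin.castLE hnq, Fin.castLE_injective hnq⟩ Finset.univ := by
  ext y
  simp only [Finset.mem_filter, Finset.mem_univ, true_and, Finset.mem_map,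
    Function.Embedding.coeFn_mk]
  constructor
  · intro hy; exact ⟨⟨y.1, hy⟩, Fin.ext rfl⟩
  · rintro ⟨j, rfl⟩; exact j.isLt

lemma card_filter_lt {q : ℕ} (n : ℕ) (hnq : n ≤ q) :
    (Finset.univ.filter (fun y : Fin q => (y:ℕ) < n)).card = n := by
  rw [filter_lt_map n hnq, Finset.card_map, Finset.card_univ, Fintype.card_fin]

lemma sum_over_filter_lt {q : ℕ} (n : ℕ) (hnq : n ≤ q) {M : Type*} [AddCommMonoid M]
    (v : Fin q → M) :
    ∑ y ∈ Finset.univ.filter (fun y : Fin q => (y:ℕ) < n), v y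
      = ∑ j : Fin n, v (Fin.castLE hnq j) := by
  rw [filter_lt_map n hnq, Finset.sum_map]; rfl

lemma prod_over_filter_lt {q : ℕ} (n : ℕ) (hnq : n ≤ q) {M : Type*} [CommMonoid M]
    (v : Fin q → M) :
    ∏ y ∈ Finset.univ.filter (fun y : Fin q => (y:ℕ) < n), v y
      = ∏ j : Fin n, v (Fin.castLE hnq j) := by
  rw [filter_lt_map n hnq, Finset.prod_map]; rfl

open Fin.CommRing in
lemma row_identity {q n : ℕ} (hn : 0 < n) (hnq : n ≤ q) (h4 : n % 4 = 1)
    (G F : Fin q → Fin 2) (α β : Fin 2) :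
    (∑ w : Fin 4, pauli w α β * ∏ y : Fin q, pauli (if (y:ℕ) < n then w else 0) (G y) (F y))
    = if ((β = ∑ j : Fin n, G (Fin.castLE hnq j)) ∧ (α = ∑ j : Fin n, F (Fin.castLE hnq j)) ∧
        ∀ y : Fin q, ((0 < (y:ℕ) ∧ (y:ℕ) < n) →
            G y + G ⟨0, lt_of_lt_of_le hn hnq⟩ = F y + F ⟨0, lt_of_lt_of_le hn hnq⟩)
          ∧ (n ≤ (y:ℕ) → G y = F y))
      then 2 else 0 := by
  have hodd : n % 2 = 1 := by omega
  set y0 : Fin q := ⟨0, lt_of_lt_of_le hn hnq⟩ with hy0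
  set s : Finset (Fin q) := Finset.univ.filter (fun y : Fin q => (y:ℕ) < n) with hs
  have hy0s : y0 ∈ s := by simp [hs, hy0]; omega
  have hmem : ∀ y : Fin q, y ∈ s ↔ (y:ℕ) < n := by intro y; simp [hs]
  -- split each product
  have hsplit : ∀ w : Fin 4,
      (∏ y : Fin q, pauli (if (y:ℕ) < n then w else 0) (G y) (F y))
        = (∏ y ∈ s, pauli w (G y) (F y))
          * (∏ y ∈ Finset.univ.filter (fun y : Fin q => ¬ (y:ℕ) < n), pauli 0 (G y) (F y)) := by
    intro w
    rw [← Finset.prod_filter_mul_prod_filter_not Finset.univ (fun y : Fin q => (y:ℕ) < n)]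
    congr 1
    · exact Finset.prod_congr rfl fun y hy => by
        rw [if_pos (by simpa using (Finset.mem_filter.mp hy).2)]
    · exact Finset.prod_congr rfl fun y hy => by
        rw [if_neg (by simpa using (Finset.mem_filter.mp hy).2)]
  have htail : (∏ y ∈ Finset.univ.filter (fun y : Fin q => ¬ (y:ℕ) < n), pauli 0 (G y) (F y))
      = if (∀ y : Fin q, n ≤ (y:ℕ) → G y = F y) then 1 else 0 := by
    simp_rw [pauli_apply_zero]
    rw [prod_ite_zero _ (fun y => G y = F y) (fun _ => 1), Finset.prod_const_one]
    congr 1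
    simp only [eq_iff_iff]
    constructor
    · intro h y hy; exact h y (by simp [not_lt, hy])
    · intro h y hy
      simp only [Finset.mem_filter, Finset.mem_univ, true_and, not_lt] at hy
      exact h y hy
  rw [Fin.sum_univ_four, hsplit 0, hsplit 1, hsplit 2, hsplit 3, htail]
  -- head products
  have h0 : (∏ y ∈ s, pauli 0 (G y) (F y)) = if (∀ y ∈ s, G y = F y) then 1 else 0 := by
    simp_rw [pauli_apply_zero]
    rw [prod_ite_zero s (fun y => G y = F y) (fun _ => 1), Finset.prod_const_one]
    congr
  have h1 : (∏ y ∈ s, pauli 1 (G y) (F y)) = if (∀ y ∈ s, G y ≠ F y) then 1 else 0 := by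
    simp_rw [pauli_apply_one]
    rw [prod_ite_zero s (fun y => G y ≠ F y) (fun _ => 1), Finset.prod_const_one]
    congr
  have h3 : (∏ y ∈ s, pauli 3 (G y) (F y))
      = if (∀ y ∈ s, G y = F y) then (-1:ℂ)^(((∑ j : Fin n, G (Fin.castLE hnq j)) : Fin 2) : ℕ)
        else 0 := by
    simp_rw [pauli_apply_three]
    rw [prod_ite_zero s _ (fun y => (-1:ℂ)^((G y : ℕ)))]
    congr 1
    rw [prod_neg_one_pow s G, hs, sum_over_filter_lt n hnq G]
  have h2 : (∏ y ∈ s, pauli 2 (G y) (F y))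
      = if (∀ y ∈ s, G y ≠ F y) then
          Complex.I * (-1:ℂ)^(((∑ j : Fin n, F (Fin.castLE hnq j)) : Fin 2) : ℕ)
        else 0 := by
    simp_rw [pauli_apply_two]
    rw [prod_ite_zero s _ (fun y => Complex.I * (-1:ℂ)^((F y : ℕ)))]
    congr 1
    rw [Finset.prod_mul_distrib, Finset.prod_const, hs, card_filter_lt n hnq,
      I_pow_odd n h4, prod_neg_one_pow _ F, sum_over_filter_lt n hnq F]
  rw [h0, h1, h2, h3]
  set SG : Fin 2 := ∑ j : Fin n, G (Fin.castLE hnq j) with hSG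
  set SF : Fin 2 := ∑ j : Fin n, F (Fin.castLE hnq j) with hSF
  have hjmem : ∀ j : Fin n, (Fin.castLE hnq j) ∈ s :=
    fun j => (hmem _).mpr (by simpa using j.isLt)
  by_cases hT : ∀ y : Fin q, n ≤ (y:ℕ) → G y = F y
  · rw [if_pos hT]
    by_cases hE : ∀ y ∈ s, G y = F y
    · have hNe : ¬ (∀ y ∈ s, G y ≠ F y) := fun hc => hc y0 hy0s (hE y0 hy0s)
      simp only [if_pos hE, if_neg hNe]
      have hSGF : SF = SG := by
        rw [hSF, hSG]
        exact Finset.sum_congr rfl fun j _ => (hE _ (hjmem j)).symm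
      have hforall : ∀ y : Fin q, ((0 < (y:ℕ) ∧ (y:ℕ) < n) → G y + G y0 = F y + F y0)
          ∧ (n ≤ (y:ℕ) → G y = F y) :=
        fun y => ⟨fun hy => by rw [hE y ((hmem y).mpr hy.2), hE y0 hy0s],
          fun hy => hT y hy⟩
      by_cases hbig : ((β = SG) ∧ (α = SF) ∧
          ∀ y : Fin q, ((0 < (y:ℕ) ∧ (y:ℕ) < n) → G y + G y0 = F y + F y0)
            ∧ (n ≤ (y:ℕ) → G y = F y))
      · rw [if_pos hbig]
        obtain ⟨hb, ha, -⟩ := hbig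
        rw [hb, ha, hSGF]
        rw [pauli_apply_zero, pauli_apply_three]
        rcases fin2_cases SG with hsg | hsg <;> rw [hsg] <;>
          norm_num [show ((0:Fin 2):ℕ) = 0 from rfl, show ((1:Fin 2):ℕ) = 1 from rfl]
      · rw [if_neg hbig]
        have hnot : ¬(β = SG ∧ α = SG) :=
          fun hc => hbig ⟨hc.1, by rw [hc.2, hSGF], hforall⟩
        rw [pauli_apply_zero, pauli_apply_three]
        rcases fin2_cases α with ha | ha <;> rcases fin2_cases β with hb | hb <;>
          rcases fin2_cases SG with hsg | hsg <;> rw [ha, hb, hsg] at hnot ⊢ <;>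
          first
            | (refine absurd ⟨?_, ?_⟩ hnot <;> decide)
            | norm_num [show ((0:Fin 2):ℕ) = 0 from rfl, show ((1:Fin 2):ℕ) = 1 from rfl,
                show (0:Fin 2) ≠ 1 by decide, show (1:Fin 2) ≠ 0 by decide]
    · by_cases hNe : ∀ y ∈ s, G y ≠ F y
      · simp only [if_neg hE, if_pos hNe]
        have hSGF : SG = SF + 1 := by
          rw [hSG, hSF]
          have : ∀ j : Fin n, G (Fin.castLE hnq j) = F (Fin.castLE hnq j) + 1 := by
            intro j
            exact (fin2_ne_iff _ _).mp (hNe _ (hjmem j))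
          rw [Finset.sum_congr rfl fun j _ => this j, Finset.sum_add_distrib,
            Finset.sum_const, Finset.card_univ, Fintype.card_fin, nsmul_eq_mul,
            fin2_natCast_odd n hodd, mul_one]
        have hforall : ∀ y : Fin q, ((0 < (y:ℕ) ∧ (y:ℕ) < n) → G y + G y0 = F y + F y0)
            ∧ (n ≤ (y:ℕ) → G y = F y) :=
          fun y => ⟨fun hy => by
              rw [(fin2_ne_iff _ _).mp (hNe y ((hmem y).mpr hy.2)),
                (fin2_ne_iff _ _).mp (hNe y0 hy0s), fin2_arith],
            fun hy => hT y hy⟩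
        by_cases hbig : ((β = SG) ∧ (α = SF) ∧
            ∀ y : Fin q, ((0 < (y:ℕ) ∧ (y:ℕ) < n) → G y + G y0 = F y + F y0)
              ∧ (n ≤ (y:ℕ) → G y = F y))
        · rw [if_pos hbig]
          obtain ⟨hb, ha, -⟩ := hbig
          rw [hb, ha, hSGF]
          rw [pauli_apply_one, pauli_apply_two]
          rcases fin2_cases SF with hsf | hsf <;> rw [hsf] <;>
            simp only [show ((0:Fin 2) + 1 : Fin 2) = 1 by decide,
              show ((1:Fin 2) + 1 : Fin 2) = 0 by decide] <;>
            norm_num [show ((0:Fin 2):ℕ) = 0 from rfl, show ((1:Fin 2):ℕ) = 1 from rfl,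
              show (0:Fin 2) ≠ 1 by decide, show (1:Fin 2) ≠ 0 by decide, Complex.I_mul_I]
        · rw [if_neg hbig]
          have hnot : ¬(β = SF + 1 ∧ α = SF) :=
            fun hc => hbig ⟨by rw [hSGF]; exact hc.1, hc.2, hforall⟩
          rw [pauli_apply_one, pauli_apply_two]
          rcases fin2_cases α with ha | ha <;> rcases fin2_cases β with hb | hb <;>
            rcases fin2_cases SF with hsf | hsf <;> rw [ha, hb, hsf] at hnot ⊢ <;>
            first
              | (refine absurd ⟨?_, ?_⟩ hnot <;> decide)
              | norm_num [show ((0:Fin 2):ℕ) = 0 from rfl, show ((1:Fin 2):ℕ) = 1 from rfl,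
                  show ((0:Fin 2) + 1 : Fin 2) = 1 by decide,
                  show ((1:Fin 2) + 1 : Fin 2) = 0 by decide,
                  show (0:Fin 2) ≠ 1 by decide, show (1:Fin 2) ≠ 0 by decide, Complex.I_mul_I]
      · simp only [if_neg hE, if_neg hNe]
        push_neg at hE hNe
        obtain ⟨y2, hy2s, hy2⟩ := hE
        obtain ⟨y1, hy1s, hy1⟩ := hNe
        have hrhs : ¬ ((β = SG) ∧ (α = SF) ∧
            ∀ y : Fin q, ((0 < (y:ℕ) ∧ (y:ℕ) < n) → G y + G y0 = F y + F y0)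
              ∧ (n ≤ (y:ℕ) → G y = F y)) := by
          rintro ⟨-, -, h3⟩
          by_cases h00 : G y0 = F y0
          · by_cases hy20 : (y2:ℕ) = 0
            · exact hy2 (by rw [show y2 = y0 from Fin.ext hy20]; exact h00)
            · have := (h3 y2).1 ⟨by omega, (hmem y2).mp hy2s⟩
              rw [h00] at this
              exact hy2 (add_right_cancel this)
          · by_cases hy10 : (y1:ℕ) = 0
            · exact h00 (by rw [← show y1 = y0 from Fin.ext hy10]; exact hy1)
            · have := (h3 y1).1 ⟨by omega, (hmem y1).mp hy1s⟩
              rw [hy1] at this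
              exact h00 (add_left_cancel this)
        rw [if_neg hrhs]
        ring
  · rw [if_neg hT]
    have hrhs : ¬ ((β = SG) ∧ (α = SF) ∧
        ∀ y : Fin q, ((0 < (y:ℕ) ∧ (y:ℕ) < n) → G y + G y0 = F y + F y0)
          ∧ (n ≤ (y:ℕ) → G y = F y)) := by
      rintro ⟨-, -, h3⟩
      exact hT fun y hy => (h3 y).2 hy
    rw [if_neg hrhs]
    ring


open Fin.CommRing in
lemma sum_aux {n : ℕ} (hn : 0 < n) (hodd : n % 2 = 1) (v : Fin n → Fin 2) (d : Fin 2) :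
    ∑ j : Fin n, (if (j:ℕ) = 0 then (∑ i : Fin n, v i) else v j + d) = v ⟨0, hn⟩ := by
  set z0 : Fin n := ⟨0, hn⟩ with hz0
  rw [← Finset.add_sum_erase _ _ (Finset.mem_univ z0)]
  rw [if_pos rfl]
  have h1 : ∑ j ∈ Finset.univ.erase z0, (if (j:ℕ) = 0 then (∑ i : Fin n, v i) else v j + d)
      = ∑ j ∈ Finset.univ.erase z0, (v j + d) :=
    Finset.sum_congr rfl fun j hj => by
      rw [if_neg fun h0 => (Finset.mem_erase.mp hj).1 (Fin.ext h0)]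
  rw [h1, Finset.sum_add_distrib, Finset.sum_const,
    Finset.card_erase_of_mem (Finset.mem_univ z0), Finset.card_univ, Fintype.card_fin]
  have h2 : ∑ j ∈ Finset.univ.erase z0, v j = (∑ i : Fin n, v i) + v z0 := by
    have h := Finset.add_sum_erase Finset.univ v (Finset.mem_univ z0)
    rw [← h, add_comm (v z0), add_assoc, fin2_add_self, add_zero]
  rw [h2]
  have h3 : (n - 1) • d = 0 := by
    rw [nsmul_eq_mul]
    have : ((n-1:ℕ) : Fin 2) = 0 := by
      apply Fin.ext; rw [Fin.val_natCast]; omega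
    rw [this, zero_mul]
  rw [h3, add_zero, ← add_assoc, fin2_add_self, zero_add]

lemma colSum_tfun {p q : ℕ} (n : ℕ) (hn : 0 < n) (hnq : n ≤ q) (hodd : n % 2 = 1)
    (f : GState p q) (x : Fin p) :
    colSum n hnq (tfun n hn hnq f) x = f (x, ⟨0, lt_of_lt_of_le hn hnq⟩) := by
  unfold colSum
  have h : ∀ j : Fin n, tfun n hn hnq f (x, Fin.castLE hnq j)
      = (if (j:ℕ) = 0 then (∑ i : Fin n, f (x, Fin.castLE hnq i))
         else f (x, Fin.castLE hnq j) + colSum n hnq f x) := by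
    intro j
    show (if ((Fin.castLE hnq j : Fin q):ℕ) < n then _ else _) = _
    rw [if_pos (show ((Fin.castLE hnq j : Fin q):ℕ) < n from j.isLt)]
    rfl
  rw [Finset.sum_congr rfl fun j _ => h j]
  exact sum_aux hn hodd (fun j => f (x, Fin.castLE hnq j)) (colSum n hnq f x)

lemma colSum_sfun {p q : ℕ} (n : ℕ) (hn : 0 < n) (hnq : n ≤ q) (hodd : n % 2 = 1)
    (f : GState p q) (x : Fin p) :
    colSum n hnq (sfun n hn hnq f) x = f (x, ⟨0, lt_of_lt_of_le hn hnq⟩) := by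
  unfold colSum
  have h : ∀ j : Fin n, sfun n hn hnq f (x, Fin.castLE hnq j)
      = (if (j:ℕ) = 0 then (∑ i : Fin n, f (x, Fin.castLE hnq i))
         else f (x, Fin.castLE hnq j) + f (x, ⟨0, lt_of_lt_of_le hn hnq⟩)) := by
    intro j
    show (if ((Fin.castLE hnq j : Fin q):ℕ) < n then _ else _) = _
    rw [if_pos (show ((Fin.castLE hnq j : Fin q):ℕ) < n from j.isLt)]
    rfl
  rw [Finset.sum_congr rfl fun j _ => h j]
  exact sum_aux hn hodd (fun j => f (x, Fin.castLE hnq j)) (f (x, ⟨0, lt_of_lt_of_le hn hnq⟩))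

lemma tfun_at_zero {p q : ℕ} (n : ℕ) (hn : 0 < n) (hnq : n ≤ q) (f : GState p q) (x : Fin p) :
    tfun n hn hnq f (x, ⟨0, lt_of_lt_of_le hn hnq⟩) = colSum n hnq f x := by
  show (if ((0:ℕ)) < n then _ else _) = _
  rw [if_pos hn, if_pos rfl]

lemma sfun_tfun {p q : ℕ} (n : ℕ) (hn : 0 < n) (hnq : n ≤ q) (hodd : n % 2 = 1)
    (f : GState p q) : sfun n hn hnq (tfun n hn hnq f) = f := by
  funext z
  obtain ⟨x, y⟩ := z
  show (if (y:ℕ) < n then _ else _) = _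
  by_cases hyn : (y:ℕ) < n
  · rw [if_pos hyn]
    by_cases hy0 : (y:ℕ) = 0
    · rw [if_pos hy0, colSum_tfun n hn hnq hodd f x]
      congr 2
      exact Fin.ext hy0.symm
    · rw [if_neg hy0]
      have h1 : tfun n hn hnq f (x,y) = f (x,y) + colSum n hnq f x := by
        show (if (y:ℕ) < n then _ else _) = _
        rw [if_pos hyn, if_neg hy0]
      rw [h1, tfun_at_zero n hn hnq f x, add_assoc, fin2_add_self, add_zero]
  · rw [if_neg hyn]
    show (if (y:ℕ) < n then _ else _) = _
    rw [if_neg hyn]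

lemma tfun_sfun {p q : ℕ} (n : ℕ) (hn : 0 < n) (hnq : n ≤ q) (hodd : n % 2 = 1)
    (f : GState p q) : tfun n hn hnq (sfun n hn hnq f) = f := by
  funext z
  obtain ⟨x, y⟩ := z
  show (if (y:ℕ) < n then _ else _) = _
  by_cases hyn : (y:ℕ) < n
  · rw [if_pos hyn]
    by_cases hy0 : (y:ℕ) = 0
    · rw [if_pos hy0, colSum_sfun n hn hnq hodd f x]
      congr 2
      exact Fin.ext hy0.symm
    · rw [if_neg hy0]
      have h1 : sfun n hn hnq f (x,y) = f (x,y) + f (x, ⟨0, lt_of_lt_of_le hn hnq⟩) := by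
        show (if (y:ℕ) < n then _ else _) = _
        rw [if_pos hyn, if_neg hy0]
      rw [h1, colSum_sfun n hn hnq hodd f x, add_assoc, fin2_add_self, add_zero]
  · rw [if_neg hyn]
    show (if (y:ℕ) < n then _ else _) = _
    rw [if_neg hyn]

def tEquiv {p q : ℕ} (n : ℕ) (hn : 0 < n) (hnq : n ≤ q) (hodd : n % 2 = 1) :
    GState p q ≃ GState p q where
  toFun := tfun n hn hnq
  invFun := sfun n hn hnq
  left_inv := sfun_tfun n hn hnq hodd
  right_inv := tfun_sfun n hn hnq hodd


set_option maxHeartbeats 1000000 in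
theorem encoded_state_pauli_support (p n m : ℕ) (hp : 0 < p) (hn : 0 < n)
    (h4 : n % 4 = 1) (hm : 0 < m)
    (Ψ : Matrix (Fin p → Fin 2) (Fin p → Fin 2) ℂ)
    (hΨ : Ψ.PosSemidef) (hΨtr : Ψ.trace = 1) :
    encU p (n + m) n hn (Nat.le_add_right n m) *
        Echan p (n + m) (Nat.add_pos_left hn m) Ψ *
        (encU p (n + m) n hn (Nat.le_add_right n m))ᴴ =
      ((1 : ℂ) / 2 ^ (p * (n + m))) •
        ∑ v : Fin p → Fin 4, (pauliString v * Ψ).trace •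
          gridPauli (fun x y => if (y : ℕ) < n then v x else 0) := by
  have hnq : n ≤ n + m := Nat.le_add_right n m
  have hodd : n % 2 = 1 := by omega
  have hUeq : encU p (n + m) n hn (Nat.le_add_right n m)
      = permOf ⇑(tEquiv n hn hnq hodd) := encU_eq n hn (Nat.le_add_right n m)
  rw [hUeq]
  ext g f
  rw [conj_permOf (tEquiv n hn hnq hodd) _ g f]
  show Echan p (n + m) (Nat.add_pos_left hn m) Ψ (sfun n hn hnq g) (sfun n hn hnq f) = _
  simp only [Matrix.smul_apply, Matrix.sum_apply, smul_eq_mul]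
  set B : Fin p → Fin 2 := fun x => ∑ j : Fin n, g (x, Fin.castLE hnq j) with hBdef
  set A : Fin p → Fin 2 := fun x => ∑ j : Fin n, f (x, Fin.castLE hnq j) with hAdef
  set C : Prop := ∀ x : Fin p, ∀ y : Fin (n + m),
    ((0 < (y:ℕ) ∧ (y:ℕ) < n) → g (x, y) + g (x, ⟨0, lt_of_lt_of_le hn hnq⟩)
        = f (x, y) + f (x, ⟨0, lt_of_lt_of_le hn hnq⟩))
    ∧ (n ≤ (y:ℕ) → g (x, y) = f (x, y)) with hCdef
  have hargG : (fun x => sfun n hn hnq g (x, ⟨0, Nat.add_pos_left hn m⟩)) = B := by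
    funext x
    show (if ((0:ℕ)) < n then _ else _) = _
    rw [if_pos hn, if_pos rfl]
    rfl
  have hargF : (fun x => sfun n hn hnq f (x, ⟨0, Nat.add_pos_left hn m⟩)) = A := by
    funext x
    show (if ((0:ℕ)) < n then _ else _) = _
    rw [if_pos hn, if_pos rfl]
    rfl
  have hcondiff : (∀ (x : Fin p) (y : Fin (n + m)), y ≠ ⟨0, Nat.add_pos_left hn m⟩ →
      sfun n hn hnq g (x, y) = sfun n hn hnq f (x, y)) ↔ C := by
    rw [hCdef]
    constructor
    · intro h x y
      constructor
      · intro hy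
        have hne : y ≠ ⟨0, Nat.add_pos_left hn m⟩ := by
          intro he; rw [he] at hy; simp at hy
        have h2 := h x y hne
        rw [show sfun n hn hnq g (x, y)
              = g (x, y) + g (x, ⟨0, lt_of_lt_of_le hn hnq⟩) from by
            show (if (y:ℕ) < n then _ else _) = _
            rw [if_pos hy.2, if_neg (show ¬((y:ℕ) = 0) by omega)],
          show sfun n hn hnq f (x, y)
              = f (x, y) + f (x, ⟨0, lt_of_lt_of_le hn hnq⟩) from by
            show (if (y:ℕ) < n then _ else _) = _
            rw [if_pos hy.2, if_neg (show ¬((y:ℕ) = 0) by omega)]] at h2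
        exact h2
      · intro hy
        have hne : y ≠ ⟨0, Nat.add_pos_left hn m⟩ := by
          intro he; rw [he] at hy; simp at hy; omega
        have h2 := h x y hne
        rw [show sfun n hn hnq g (x, y) = g (x, y) from by
            show (if (y:ℕ) < n then _ else _) = _
            rw [if_neg (show ¬((y:ℕ) < n) by omega)],
          show sfun n hn hnq f (x, y) = f (x, y) from by
            show (if (y:ℕ) < n then _ else _) = _
            rw [if_neg (show ¬((y:ℕ) < n) by omega)]] at h2
        exact h2
    · intro h x y hy
      have hy0 : (y:ℕ) ≠ 0 := fun h0 => hy (Fin.ext h0)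
      by_cases hyn : (y:ℕ) < n
      · show (if (y:ℕ) < n then _ else _) = (if (y:ℕ) < n then _ else _)
        rw [if_pos hyn, if_pos hyn, if_neg hy0, if_neg hy0]
        exact (h x y).1 ⟨by omega, hyn⟩
      · show (if (y:ℕ) < n then _ else _) = (if (y:ℕ) < n then _ else _)
        rw [if_neg hyn, if_neg hyn]
        exact (h x y).2 (by omega)
  have htr : ∀ v : Fin p → Fin 4, (pauliString v * Ψ).trace
      = ∑ aa : Fin p → Fin 2, ∑ bb : Fin p → Fin 2, pauliString v aa bb * Ψ bb aa := by
    intro v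
    simp [Matrix.trace, Matrix.diag, Matrix.mul_apply]
  have key : ∀ aa bb : Fin p → Fin 2,
      (∑ v : Fin p → Fin 4, pauliString v aa bb
        * gridPauli (fun x y => if (y : ℕ) < n then v x else 0) g f)
      = if (bb = B ∧ aa = A ∧ C) then (2:ℂ)^p else 0 := by
    intro aa bb
    have hterm : ∀ v : Fin p → Fin 4, pauliString v aa bb
        * gridPauli (fun x y => if (y : ℕ) < n then v x else 0) g f
        = ∏ x : Fin p, (pauli (v x) (aa x) (bb x)
            * ∏ y : Fin (n + m), pauli (if (y:ℕ) < n then v x else 0) (g (x, y)) (f (x, y))) := by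
      intro v
      show (∏ x : Fin p, pauli (v x) (aa x) (bb x))
          * (∏ z : Fin p × Fin (n + m),
              pauli (if ((z.2:ℕ)) < n then v z.1 else 0) (g z) (f z)) = _
      rw [Fintype.prod_prod_type, ← Finset.prod_mul_distrib]
    rw [Finset.sum_congr rfl fun v _ => hterm v]
    have hswap : (∑ v : Fin p → Fin 4,
        ∏ x : Fin p, (pauli (v x) (aa x) (bb x)
          * ∏ y : Fin (n + m), pauli (if (y:ℕ) < n then v x else 0) (g (x, y)) (f (x, y))))
        = ∏ x : Fin p, ∑ w : Fin 4, (pauli w (aa x) (bb x)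
          * ∏ y : Fin (n + m), pauli (if (y:ℕ) < n then w else 0) (g (x, y)) (f (x, y))) :=
      (Fintype.prod_sum (κ := fun _ : Fin p => Fin 4)
        (f := fun x w => pauli w (aa x) (bb x)
          * ∏ y : Fin (n + m), pauli (if (y:ℕ) < n then w else 0) (g (x, y)) (f (x, y)))).symm
    rw [hswap]
    have hrow : ∀ x : Fin p,
        (∑ w : Fin 4, pauli w (aa x) (bb x)
          * ∏ y : Fin (n + m), pauli (if (y:ℕ) < n then w else 0) (g (x, y)) (f (x, y)))
        = if ((bb x = ∑ j : Fin n, g (x, Fin.castLE hnq j))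
            ∧ (aa x = ∑ j : Fin n, f (x, Fin.castLE hnq j))
            ∧ ∀ y : Fin (n + m), ((0 < (y:ℕ) ∧ (y:ℕ) < n) →
                g (x, y) + g (x, ⟨0, lt_of_lt_of_le hn hnq⟩)
                  = f (x, y) + f (x, ⟨0, lt_of_lt_of_le hn hnq⟩))
              ∧ (n ≤ (y:ℕ) → g (x, y) = f (x, y)))
          then 2 else 0 :=
      fun x => row_identity hn hnq h4 (fun y => g (x, y)) (fun y => f (x, y)) (aa x) (bb x)
    rw [Finset.prod_congr rfl fun x _ => hrow x]
    rw [prod_ite_zero Finset.univ _ (fun _ => (2:ℂ)), Finset.prod_const,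
      Finset.card_univ, Fintype.card_fin]
    have hiff : (∀ x : Fin p, ((bb x = ∑ j : Fin n, g (x, Fin.castLE hnq j))
            ∧ (aa x = ∑ j : Fin n, f (x, Fin.castLE hnq j))
            ∧ ∀ y : Fin (n + m), ((0 < (y:ℕ) ∧ (y:ℕ) < n) →
                g (x, y) + g (x, ⟨0, lt_of_lt_of_le hn hnq⟩)
                  = f (x, y) + f (x, ⟨0, lt_of_lt_of_le hn hnq⟩))
              ∧ (n ≤ (y:ℕ) → g (x, y) = f (x, y))))
        ↔ (bb = B ∧ aa = A ∧ C) := by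
      rw [hCdef]
      constructor
      · intro h
        exact ⟨funext fun x => (h x).1, funext fun x => (h x).2.1, fun x => (h x).2.2⟩
      · rintro ⟨h1, h2, h3⟩ x
        exact ⟨congrFun h1 x, congrFun h2 x, h3 x⟩
    by_cases hall : bb = B ∧ aa = A ∧ C
    · rw [if_pos (fun x _ => (hiff.mpr hall) x), if_pos hall]
    · rw [if_neg (fun hc => hall (hiff.mp (fun x => hc x (Finset.mem_univ x)))), if_neg hall]
  have hsum : (∑ aa : Fin p → Fin 2, ∑ bb : Fin p → Fin 2,
      Ψ bb aa * (if (bb = B ∧ aa = A ∧ C) then (2:ℂ)^p else 0))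
      = if C then (2:ℂ)^p * Ψ B A else 0 := by
    by_cases hC' : C
    · rw [if_pos hC']
      have h1 : ∀ aa bb : Fin p → Fin 2,
          Ψ bb aa * (if (bb = B ∧ aa = A ∧ C) then (2:ℂ)^p else 0)
          = if bb = B then (if aa = A then Ψ bb aa * 2^p else 0) else 0 := by
        intro aa bb
        by_cases h1 : bb = B <;> by_cases h2 : aa = A
        · rw [if_pos ⟨h1, h2, hC'⟩, if_pos h1, if_pos h2]
        · rw [if_neg (fun hc => h2 hc.2.1), mul_zero, if_pos h1, if_neg h2]
        · rw [if_neg (fun hc => h1 hc.1), mul_zero, if_neg h1]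
        · rw [if_neg (fun hc => h1 hc.1), mul_zero, if_neg h1]
      simp_rw [h1]
      simp [Finset.sum_ite_eq', mul_comm]
    · rw [if_neg hC']
      have h1 : ∀ aa bb : Fin p → Fin 2,
          Ψ bb aa * (if (bb = B ∧ aa = A ∧ C) then (2:ℂ)^p else 0) = 0 := by
        intro aa bb; rw [if_neg (fun hc => hC' hc.2.2), mul_zero]
      simp [h1]
  have hRHS : (∑ v : Fin p → Fin 4, (pauliString v * Ψ).trace
      * gridPauli (fun x y => if (y : ℕ) < n then v x else 0) g f)
      = if C then (2:ℂ)^p * Ψ B A else 0 := by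
    calc (∑ v : Fin p → Fin 4, (pauliString v * Ψ).trace
        * gridPauli (fun x y => if (y : ℕ) < n then v x else 0) g f)
        = ∑ v : Fin p → Fin 4, ∑ aa : Fin p → Fin 2, ∑ bb : Fin p → Fin 2,
            pauliString v aa bb * Ψ bb aa
              * gridPauli (fun x y => if (y : ℕ) < n then v x else 0) g f := by
          refine Finset.sum_congr rfl fun v _ => ?_
          rw [htr v, Finset.sum_mul]
          exact Finset.sum_congr rfl fun aa _ => Finset.sum_mul _ _ _
      _ = ∑ aa : Fin p → Fin 2, ∑ bb : Fin p → Fin 2, Ψ bb aa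
            * (∑ v : Fin p → Fin 4, pauliString v aa bb
                * gridPauli (fun x y => if (y : ℕ) < n then v x else 0) g f) := by
          rw [Finset.sum_comm]
          refine Finset.sum_congr rfl fun aa _ => ?_
          rw [Finset.sum_comm]
          refine Finset.sum_congr rfl fun bb _ => ?_
          rw [Finset.mul_sum]
          exact Finset.sum_congr rfl fun v _ => by ring
      _ = ∑ aa : Fin p → Fin 2, ∑ bb : Fin p → Fin 2, Ψ bb aa
            * (if (bb = B ∧ aa = A ∧ C) then (2:ℂ)^p else 0) :=
          Finset.sum_congr rfl fun aa _ => Finset.sum_congr rfl fun bb _ => by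
            rw [key aa bb]
      _ = if C then (2:ℂ)^p * Ψ B A else 0 := hsum
  show Ψ (fun x => sfun n hn hnq g (x, ⟨0, Nat.add_pos_left hn m⟩))
      (fun x => sfun n hn hnq f (x, ⟨0, Nat.add_pos_left hn m⟩)) * _ = _
  rw [hargG, hargF, hRHS]
  by_cases hC' : C
  · rw [if_pos (hcondiff.mpr hC'), if_pos hC']
    have hexp : p * (n + m) = p * ((n + m) - 1) + p := by
      have h1 : n + m = ((n + m) - 1) + 1 := by omega
      calc p * (n + m) = p * (((n + m) - 1) + 1) := by rw [← h1]
        _ = p * ((n + m) - 1) + p := by ring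
    have harith : ((1:ℂ)/2)^(p*((n + m)-1)) = 1/2^(p*(n + m)) * 2^p := by
      rw [div_pow, one_pow, hexp, pow_add]
      have h2 : (2:ℂ)^(p*((n + m)-1)) ≠ 0 := pow_ne_zero _ two_ne_zero
      have h3 : (2:ℂ)^p ≠ 0 := pow_ne_zero _ two_ne_zero
      field_simp
    rw [harith]
    ring
  · rw [if_neg (fun hcon => hC' (hcondiff.mp hcon)), if_neg hC']
    simp

end
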